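/- Let T₀ = 1, T₁ = 2, T₂ = 4, Tₙ = T_{n−1} + T_{n−2} + T_{n−3}. Every integer N has a unique representation N = Σ_{j=1}^{n} yⱼ T_{n−j} with y₁ ≠ 0 and yⱼ ∈ {−1, 0, 1} such that y₁⋯yₙ avoids the factors 11, 101, 1(−1) and their negatives. -/

import Mathlib

def Trib : ℕ → ℕ
  | 0 => 1
  | 1 => 2
  | 2 => 4
  | n + 3 => Trib (n + 2) + Trib (n + 1) + Trib n

/-- Value of a digit word y₁⋯yₙ in the Tribonacci numeration system:
`∑_{j=1}^n yⱼ T_{n-j}`. -/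
def Tval (L : List ℤ) : ℤ :=
  ∑ i ∈ Finset.range L.length, L.getD i 0 * (Trib (L.length - 1 - i) : ℤ)

/-- Forbidden factors: 11, 101, 1(-1) and their negatives. -/
def TforbiddenT : List (List ℤ) :=
  [[1, 1], [1, 0, 1], [1, -1], [-1, -1], [-1, 0, -1], [-1, 1]]

namespace TribAux

def A : ℕ → ℕ
  | 0 => 0
  | 1 => 1
  | 2 => 2
  | n + 3 => Trib (n + 2) + A n

theorem trib_pos : ∀ n, 0 < Trib n
  | 0 => by decide
  | 1 => by decide
  | 2 => by decide
  | n + 3 => by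
    have := trib_pos n
    show 0 < Trib (n+2) + Trib (n+1) + Trib n
    omega

theorem AT : ∀ n, A (n + 1) + A n + 1 = Trib (n + 1)
  | 0 => by decide
  | 1 => by decide
  | 2 => by decide
  | n + 3 => by
    have h := AT n
    show A (n + 4) + A (n + 3) + 1 = Trib (n + 4)
    show (Trib (n + 3) + A (n + 1)) + (Trib (n + 2) + A n) + 1
        = Trib (n + 3) + Trib (n + 2) + Trib (n + 1)
    omega

theorem AT' : ∀ n, A n + A (n - 1) + 1 = Trib n
  | 0 => by decide
  | n + 1 => by simpa using AT n

theorem A_succ : ∀ n, A (n + 1) = Trib n + A (n - 2)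
  | 0 => by decide
  | 1 => by decide
  | 2 => by decide
  | n + 3 => rfl

theorem trib_step : ∀ n, Trib n ≤ Trib (n + 1)
  | 0 => by decide
  | 1 => by decide
  | 2 => by decide
  | n + 3 => by
    show Trib (n + 3) ≤ Trib (n + 3) + Trib (n + 2) + Trib (n + 1)
    omega

theorem A_step : ∀ n, A n ≤ A (n + 1)
  | 0 => by decide
  | 1 => by decide
  | 2 => by decide
  | n + 3 => by
    have h1 := trib_step (n + 2)
    have h1' : Trib (n + 2 + 1) = Trib (n + 3) := rfl
    have h2 := A_step n
    show Trib (n + 2) + A n ≤ Trib (n + 3) + A (n + 1)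
    omega

theorem A_mono {m n : ℕ} (h : m ≤ n) : A m ≤ A n := by
  induction n with
  | zero =>
    have hm : m = 0 := Nat.le_zero.mp h
    simp [hm]
  | succ n ih =>
    rcases Nat.lt_or_ge m (n+1) with h' | h'
    · exact le_trans (ih (by omega)) (A_step n)
    · have : m = n + 1 := by omega
      subst this; rfl

theorem lt_of_A_lt {m n : ℕ} (h : A m < A n) : m < n := by
  by_contra h'
  exact absurd (A_mono (by omega : n ≤ m)) (by omega)

theorem A_unbounded : ∀ m, m ≤ A (3 * m)
  | 0 => le_refl 0
  | m + 1 => by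
    have h := A_unbounded m
    have h2 : A (3 * (m + 1)) = Trib (3 * m + 2) + A (3 * m) := by
      show A (3 * m + 3) = _
      rfl
    have := trib_pos (3 * m + 2)
    omega

theorem tval_nil : Tval [] = 0 := by simp [Tval]

theorem tval_cons (a : ℤ) (L : List ℤ) :
    Tval (a :: L) = a * Trib L.length + Tval L := by
  unfold Tval
  rw [List.length_cons, Finset.sum_range_succ']
  have h1 : ∀ i ∈ Finset.range L.length,
      (a :: L).getD (i + 1) 0 * (Trib (L.length + 1 - 1 - (i + 1)) : ℤ)
        = L.getD i 0 * (Trib (L.length - 1 - i) : ℤ) := by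
    intro i _
    rw [List.getD_cons_succ]
    congr 3
    omega
  rw [Finset.sum_congr rfl h1]
  simp [add_comm]

end TribAux
namespace TribAux

def Dig (L : List ℤ) : Prop := ∀ d ∈ L, d = -1 ∨ d = 0 ∨ d = 1

def NoF (L : List ℤ) : Prop := ∀ w ∈ TforbiddenT, ¬ w.IsInfix L

theorem noF_nil : NoF [] := by
  intro w hw hinf
  have := hinf.length_le
  fin_cases hw <;> simp_all

theorem dig_tail {a : ℤ} {L : List ℤ} (h : Dig (a :: L)) : Dig L :=
  fun d hd => h d (List.mem_cons_of_mem a hd)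

theorem noF_tail {a : ℤ} {L : List ℤ} (h : NoF (a :: L)) : NoF L :=
  fun w hw hinf => h w hw (hinf.trans (List.suffix_cons a L).isInfix)

theorem noF_cons_zero {L : List ℤ} (h : NoF L) : NoF (0 :: L) := by
  intro w hw hinf
  rcases List.infix_cons_iff.mp hinf with hpre | hinf'
  · fin_cases hw <;>
      · rcases hpre with ⟨t, ht⟩
        simp at ht
  · exact h w hw hinf'

def negL (L : List ℤ) : List ℤ := L.map (fun d => -d)

theorem negL_negL (L : List ℤ) : negL (negL L) = L := by
  simp [negL, List.map_map, Function.comp]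

theorem length_negL (L : List ℤ) : (negL L).length = L.length := by simp [negL]

theorem dig_negL {L : List ℤ} (h : Dig L) : Dig (negL L) := by
  intro d hd
  simp only [negL, List.mem_map] at hd
  obtain ⟨e, he, rfl⟩ := hd
  rcases h e he with rfl | rfl | rfl <;> simp

theorem infix_negL {w L : List ℤ} (h : w.IsInfix L) : (negL w).IsInfix (negL L) := by
  obtain ⟨s, t, rfl⟩ := h
  exact ⟨negL s, negL t, by simp [negL]⟩

theorem negL_mem_forbidden {w : List ℤ} (hw : w ∈ TforbiddenT) : negL w ∈ TforbiddenT := by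
  fin_cases hw <;> simp [negL, TforbiddenT]

theorem noF_negL {L : List ℤ} (h : NoF L) : NoF (negL L) := by
  intro w hw hinf
  have h2 := infix_negL hinf
  rw [negL_negL] at h2
  exact h (negL w) (negL_mem_forbidden hw) h2

theorem tval_negL : ∀ L : List ℤ, Tval (negL L) = -Tval L
  | [] => by simp [negL, tval_nil]
  | a :: L => by
    have : negL (a :: L) = (-a) :: negL L := rfl
    rw [this, tval_cons, tval_cons, tval_negL L, length_negL]
    ring

theorem one_cons_struct {L' : List ℤ} (hD : Dig (1 :: L')) (hN : NoF (1 :: L')) :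
    L' = [] ∨ ∃ L'', L' = 0 :: L'' ∧ L''.head? ≠ some 1 := by
  cases L' with
  | nil => exact Or.inl rfl
  | cons b L'' =>
    right
    have hb : b = -1 ∨ b = 0 ∨ b = 1 := hD b (by simp)
    have hb1 : b ≠ 1 := by
      rintro rfl
      exact hN [1, 1] (by simp [TforbiddenT]) ⟨[], L'', rfl⟩
    have hbm1 : b ≠ -1 := by
      rintro rfl
      exact hN [1, -1] (by simp [TforbiddenT]) ⟨[], L'', rfl⟩
    have hb0 : b = 0 := by tauto
    subst hb0
    refine ⟨L'', rfl, ?_⟩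
    intro hhead
    cases L'' with
    | nil => simp at hhead
    | cons c L''' =>
      simp at hhead
      subst hhead
      exact hN [1, 0, 1] (by simp [TforbiddenT]) ⟨[], L''', rfl⟩

end TribAux
namespace TribAux

theorem tval_ub : ∀ n : ℕ, ∀ L : List ℤ, L.length ≤ n → Dig L → NoF L →
    Tval L ≤ (A L.length : ℤ) ∧
      (L.head? ≠ some 1 → Tval L ≤ (A (L.length - 1) : ℤ)) := by
  intro n
  induction n with
  | zero =>
    intro L hL _ _
    have : L = [] := List.length_eq_zero_iff.mp (Nat.le_zero.mp hL)
    subst this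
    simp [tval_nil, A]
  | succ n ih =>
    intro L hL hD hN
    cases L with
    | nil => simp [tval_nil, A]
    | cons a L' =>
      simp only [List.length_cons] at hL ⊢
      rcases hD a List.mem_cons_self with rfl | rfl | rfl
      · -- a = -1
        have ihL' := ih L' (by omega) (dig_tail hD) (noF_tail hN)
        have hpos := trib_pos L'.length
        have hstep := A_step L'.length
        rw [tval_cons]
        constructor
        · have := ihL'.1
          push_cast
          have hl : (L'.length + 1 - 1 : ℕ) = L'.length := by omega
          nlinarith [this]
        · intro _
          have := ihL'.1
          simp only [Nat.add_sub_cancel]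
          push_cast
          nlinarith [this]
      · -- a = 0
        have ihL' := ih L' (by omega) (dig_tail hD) (noF_tail hN)
        have hstep := A_step L'.length
        rw [tval_cons]
        constructor
        · have := ihL'.1
          push_cast
          linarith [this]
        · intro _
          have := ihL'.1
          simp only [Nat.add_sub_cancel]
          linarith [this]
      · -- a = 1
        constructor
        · rcases one_cons_struct hD hN with rfl | ⟨L'', rfl, hh⟩
          · rw [tval_cons, tval_nil]
            norm_num [A, Trib]
          · have hD'' : Dig L'' := dig_tail (dig_tail hD)
            have hN'' : NoF L'' := noF_tail (noF_tail hN)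
            have ihL'' := ih L'' (by simp at hL ⊢; omega) hD'' hN''
            have h2 := ihL''.2 hh
            rw [tval_cons, tval_cons]
            simp only [List.length_cons]
            have hA : A (L''.length + 1 + 1) = Trib (L''.length + 1) + A (L''.length + 1 - 2) :=
              A_succ (L''.length + 1)
            have hidx : (L''.length + 1 - 2 : ℕ) = L''.length - 1 := by omega
            rw [hidx] at hA
            push_cast [hA]
            linarith [h2]
        · intro h
          simp at h
  termination_by n => n

theorem tval_abs_ub {L : List ℤ} (hD : Dig L) (hN : NoF L) : |Tval L| ≤ (A L.length : ℤ) := by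
  have h1 := (tval_ub L.length L le_rfl hD hN).1
  have h2 := (tval_ub L.length (negL L) (by rw [length_negL]) (dig_negL hD) (noF_negL hN)).1
  rw [tval_negL, length_negL] at h2
  rw [abs_le]
  constructor <;> linarith

theorem tval_lb {L : List ℤ} (hD : Dig L) (hN : NoF L) :
    -(A L.length : ℤ) ≤ Tval L ∧
      (L.head? ≠ some (-1) → -(A (L.length - 1) : ℤ) ≤ Tval L) := by
  have h2 := tval_ub (negL L).length (negL L) le_rfl (dig_negL hD) (noF_negL hN)
  rw [tval_negL, length_negL] at h2
  refine ⟨by linarith [h2.1], ?_⟩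
  intro hh
  have hh' : (negL L).head? ≠ some 1 := by
    cases L with
    | nil => simp [negL]
    | cons a L' =>
      simp only [negL, List.map_cons, List.head?_cons, Ne, Option.some_inj] at hh ⊢
      omega
  have := h2.2 hh'
  linarith [this]

theorem tval_head_one {L' : List ℤ} (hD : Dig (1 :: L')) (hN : NoF (1 :: L')) :
    (A L'.length : ℤ) < Tval (1 :: L') := by
  rcases one_cons_struct hD hN with rfl | ⟨L'', rfl, _⟩
  · rw [tval_cons, tval_nil]
    norm_num [A, Trib]
  · rw [tval_cons, tval_cons]
    have hlb := (tval_lb (dig_tail (dig_tail hD)) (noF_tail (noF_tail hN))).1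
    have hAT := AT (L''.length)
    simp only [List.length_cons]
    push_cast [← hAT]
    linarith [hlb]

theorem tval_head_negone {L' : List ℤ} (hD : Dig (-1 :: L')) (hN : NoF (-1 :: L')) :
    Tval (-1 :: L') < -(A L'.length : ℤ) := by
  have hD' : Dig (1 :: negL L') := by
    have := dig_negL hD
    simpa [negL] using this
  have hN' : NoF (1 :: negL L') := by
    have := noF_negL hN
    simpa [negL] using this
  have h := tval_head_one hD' hN'
  have h2 : Tval (1 :: negL L') = -Tval (-1 :: L') := by
    have : (1 : ℤ) :: negL L' = negL (-1 :: L') := by simp [negL]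
    rw [this, tval_negL]
  rw [h2, length_negL] at h
  linarith

end TribAux
namespace TribAux

theorem heads_lt {L' M' : List ℤ} (hlen : M'.length = L'.length)
    (hDL : Dig (1 :: L')) (hNL : NoF (1 :: L')) {b : ℤ} (hb : b = 0 ∨ b = -1)
    (hDM : Dig (b :: M')) (hNM : NoF (b :: M')) :
    Tval (b :: M') < Tval (1 :: L') := by
  have h1 := tval_head_one hDL hNL
  rcases hb with rfl | rfl
  · have h2 := (tval_ub M'.length M' le_rfl (dig_tail hDM) (noF_tail hNM)).1
    rw [hlen] at h2
    rw [tval_cons]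
    simp only [zero_mul, zero_add]
    linarith
  · have h2 := tval_head_negone hDM hNM
    rw [hlen] at h2
    have h3 : (0 : ℤ) ≤ (A L'.length : ℤ) := Int.natCast_nonneg _
    linarith

theorem tval_inj : ∀ n : ℕ, ∀ L M : List ℤ, L.length ≤ n → L.length = M.length →
    Dig L → NoF L → Dig M → NoF M → Tval L = Tval M → L = M := by
  intro n
  induction n with
  | zero =>
    intro L M hn hlen _ _ _ _ _
    have hL : L = [] := List.length_eq_zero_iff.mp (Nat.le_zero.mp hn)
    have hM : M = [] := List.length_eq_zero_iff.mp (by omega)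
    rw [hL, hM]
  | succ n ih =>
    intro L M hn hlen hDL hNL hDM hNM hval
    cases L with
    | nil =>
      cases M with
      | nil => rfl
      | cons b M' => simp at hlen
    | cons a L' =>
      cases M with
      | nil => simp at hlen
      | cons b M' =>
        have hlen' : L'.length = M'.length := by simpa using hlen
        have hab : a = b := by
          rcases hDL a List.mem_cons_self with rfl | rfl | rfl <;>
            rcases hDM b List.mem_cons_self with rfl | rfl | rfl <;>
              try rfl
          · -- a = -1, b = 0
            exfalso
            have h2 := tval_head_negone hDL hNL
            have hlb := (tval_lb (dig_tail hDM) (noF_tail hNM)).1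
            rw [← hlen'] at hlb
            rw [tval_cons 0, zero_mul, zero_add] at hval
            linarith
          · -- a = -1, b = 1
            exfalso
            have := heads_lt hlen' hDM hNM (Or.inr rfl) hDL hNL
            linarith
          · -- a = 0, b = -1
            exfalso
            have h2 := tval_head_negone hDM hNM
            have hlb := (tval_lb (dig_tail hDL) (noF_tail hNL)).1
            rw [hlen'] at hlb
            rw [tval_cons 0, zero_mul, zero_add] at hval
            linarith
          · -- a = 0, b = 1
            exfalso
            have := heads_lt hlen' hDM hNM (Or.inl rfl) hDL hNL
            linarith
          · -- a = 1, b = -1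
            exfalso
            have := heads_lt hlen'.symm hDL hNL (Or.inr rfl) hDM hNM
            linarith
          · -- a = 1, b = 0
            exfalso
            have := heads_lt hlen'.symm hDL hNL (Or.inl rfl) hDM hNM
            linarith
        subst hab
        have htail : Tval L' = Tval M' := by
          rw [tval_cons, tval_cons, hlen'] at hval
          linarith
        have : L' = M' :=
          ih L' M' (by simp at hn; omega) hlen' (dig_tail hDL) (noF_tail hNL)
            (dig_tail hDM) (noF_tail hNM) htail
        rw [this]

theorem length_lt_false {L M : List ℤ} (hDL : Dig L) (hNL : NoF L)
    (hhL : L.head? ≠ some 0) (hDM : Dig M) (hNM : NoF M)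
    (hlt : M.length < L.length) (hval : Tval L = Tval M) : False := by
  cases L with
  | nil => simp at hlt
  | cons a L' =>
    have habs := tval_abs_ub hDM hNM
    have hmono : (A M.length : ℤ) ≤ (A L'.length : ℤ) := by
      exact_mod_cast A_mono (by simp at hlt; omega)
    have habs' := abs_le.mp habs
    rcases hDL a List.mem_cons_self with rfl | rfl | rfl
    · have h := tval_head_negone hDL hNL
      linarith [habs'.1]
    · simp at hhL
    · have h := tval_head_one hDL hNL
      linarith [habs'.2]

theorem length_eq {L M : List ℤ} (hDL : Dig L) (hNL : NoF L) (hhL : L.head? ≠ some 0)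
    (hDM : Dig M) (hNM : NoF M) (hhM : M.head? ≠ some 0)
    (hval : Tval L = Tval M) : L.length = M.length := by
  rcases lt_trichotomy L.length M.length with h | h | h
  · exact absurd (length_lt_false hDM hNM hhM hDL hNL h hval.symm) not_false
  · exact h
  · exact absurd (length_lt_false hDL hNL hhL hDM hNM h hval) not_false

end TribAux
namespace TribAux

theorem tval_zero_cons (L : List ℤ) : Tval (0 :: L) = Tval L := by
  rw [tval_cons]; ring

theorem tval_pad : ∀ (p : ℕ) (M : List ℤ), Tval (List.replicate p 0 ++ M) = Tval M
  | 0, M => by simp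
  | p + 1, M => by
    rw [List.replicate_succ, List.cons_append, tval_zero_cons, tval_pad p M]

theorem noF_pad : ∀ (p : ℕ) {M : List ℤ}, NoF M → NoF (List.replicate p 0 ++ M)
  | 0, M, h => by simpa using h
  | p + 1, M, h => by
    rw [List.replicate_succ, List.cons_append]
    exact noF_cons_zero (noF_pad p h)

theorem prefix_head {x : ℤ} {xs l : List ℤ} (h : (x :: xs) <+: l) : l.head? = some x := by
  obtain ⟨t, ht⟩ := h
  rw [← ht]
  simp

theorem noF_one_cons {rest : List ℤ} (h : NoF rest) (h1 : rest.head? ≠ some 1)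
    (h2 : rest.head? ≠ some (-1)) (h3 : rest.tail.head? ≠ some 1) :
    NoF (1 :: rest) := by
  intro w hw hinf
  rcases List.infix_cons_iff.mp hinf with hpre | hinf'
  · fin_cases hw
    · rw [List.cons_prefix_cons] at hpre
      exact h1 (prefix_head hpre.2)
    · rw [List.cons_prefix_cons] at hpre
      obtain ⟨t, ht⟩ := hpre.2
      apply h3
      rw [← ht]
      simp
    · rw [List.cons_prefix_cons] at hpre
      exact h2 (prefix_head hpre.2)
    · rw [List.cons_prefix_cons] at hpre
      norm_num at hpre
    · rw [List.cons_prefix_cons] at hpre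
      norm_num at hpre
    · rw [List.cons_prefix_cons] at hpre
      norm_num at hpre
  · exact h w hw hinf'

theorem head_negL {L : List ℤ} (h : L.head? ≠ some 0) : (negL L).head? ≠ some 0 := by
  cases L with
  | nil => simp [negL]
  | cons a t =>
    simp only [negL, List.map_cons, List.head?_cons, Ne, Option.some_inj] at h ⊢
    omega

theorem exists_interval (m : ℕ) (hm : 1 ≤ m) : ∃ n, A n < m ∧ m ≤ A (n + 1) := by
  have hub : ∃ j, m ≤ A j := ⟨3 * m, A_unbounded m⟩
  have hj := Nat.find_spec hub
  have hj0 : Nat.find hub ≠ 0 := by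
    intro h
    rw [h] at hj
    have : A 0 = 0 := rfl
    omega
  refine ⟨Nat.find hub - 1, ?_, ?_⟩
  · by_contra hcon
    push_neg at hcon
    exact Nat.find_min hub (by omega) hcon
  · rw [Nat.sub_add_cancel (by omega)]
    exact hj

theorem build (n : ℕ) (M : List ℤ) (hDM : Dig M) (hNM : NoF M)
    (hMlt : M ≠ [] → M.length < n)
    (hMh : M.head? = some 1 → M.length + 2 ≤ n) :
    ∃ L : List ℤ, Dig L ∧ NoF L ∧ L.head? = some 1 ∧
      Tval L = Trib n + Tval M := by
  have hMn : M.length ≤ n := by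
    rcases eq_or_ne M [] with rfl | hMe
    · simp
    · exact le_of_lt (hMlt hMe)
  have hM0 : n - M.length = 0 → M = [] := by
    intro h0
    by_contra hne
    have := hMlt hne
    omega
  refine ⟨1 :: (List.replicate (n - M.length) 0 ++ M), ?_, ?_, rfl, ?_⟩
  · intro d hd
    simp only [List.mem_cons, List.mem_append, List.mem_replicate] at hd
    rcases hd with rfl | ⟨_, rfl⟩ | hd
    · right; right; rfl
    · right; left; rfl
    · exact hDM d hd
  · apply noF_one_cons (noF_pad _ hNM)
    · rcases Nat.eq_zero_or_pos (n - M.length) with hp0 | hp0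
      · rw [hp0, hM0 hp0]; simp
      · obtain ⟨q, hq⟩ : ∃ q, n - M.length = q + 1 := ⟨n - M.length - 1, by omega⟩
        rw [hq, List.replicate_succ]
        simp
    · rcases Nat.eq_zero_or_pos (n - M.length) with hp0 | hp0
      · rw [hp0, hM0 hp0]; simp
      · obtain ⟨q, hq⟩ : ∃ q, n - M.length = q + 1 := ⟨n - M.length - 1, by omega⟩
        rw [hq, List.replicate_succ]
        simp
    · rcases Nat.lt_or_ge (n - M.length) 2 with h2 | h2
      · rcases Nat.eq_zero_or_pos (n - M.length) with hp0 | hp1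
        · rw [hp0, hM0 hp0]; simp
        · have hp1' : n - M.length = 1 := by omega
          have hMhead : M.head? ≠ some 1 := by
            intro hc
            have := hMh hc
            omega
          rw [hp1', List.replicate_succ]
          simpa using hMhead
      · obtain ⟨q, hq⟩ : ∃ q, n - M.length = q + 2 := ⟨n - M.length - 2, by omega⟩
        rw [hq]
        simp [List.replicate_succ]
  · rw [tval_cons, tval_pad]
    have hl : (List.replicate (n - M.length) 0 ++ M).length = n := by
      simp only [List.length_append, List.length_replicate]
      omega
    rw [hl]
    ring

theorem exists_rep_pos : ∀ k : ℕ, ∀ N : ℤ, 0 < N → N.natAbs ≤ k →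
    ∃ L : List ℤ, Dig L ∧ NoF L ∧ L.head? ≠ some 0 ∧ Tval L = N := by
  intro k
  induction k using Nat.strong_induction_on with
  | _ k ih =>
  intro N hpos hNk
  have IH : ∀ N' : ℤ, N'.natAbs < N.natAbs →
      ∃ L, Dig L ∧ NoF L ∧ L.head? ≠ some 0 ∧ Tval L = N' := by
    intro N' h'
    rcases lt_trichotomy N' 0 with hneg | rfl | hpos'
    · obtain ⟨L, h1, h2, h3, h4⟩ := ih N'.natAbs (by omega) (-N') (by omega) (by omega)
      exact ⟨negL L, dig_negL h1, noF_negL h2, head_negL h3,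
        by rw [tval_negL, h4]; ring⟩
    · exact ⟨[], by intro d hd; simp at hd, noF_nil, by simp, tval_nil⟩
    · exact ih N'.natAbs (by omega) N' hpos' le_rfl
  obtain ⟨n, hn1, hn2⟩ := exists_interval N.natAbs (by omega)
  have hn1' : (A n : ℤ) < N := by omega
  have hn2' : N ≤ (A (n + 1) : ℤ) := by omega
  have hAT := AT' n
  have hAsucc := A_succ n
  have hA12 := A_mono (show n - 2 ≤ n - 1 by omega)
  have hA1n := A_mono (show n - 1 ≤ n by omega)
  have hub' : N - (Trib n : ℤ) ≤ (A (n - 2) : ℤ) := by omega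
  have hlb' : -(A (n - 1) : ℤ) ≤ N - (Trib n : ℤ) := by omega
  have hlt : (N - (Trib n : ℤ)).natAbs < N.natAbs := by omega
  obtain ⟨M, hDM, hNM, hhM, hvM⟩ := IH (N - (Trib n : ℤ)) hlt
  have hMf1 : M ≠ [] → M.length < n := by
    intro hne
    cases M with
    | nil => exact absurd rfl hne
    | cons c M'' =>
      rcases hDM c List.mem_cons_self with rfl | rfl | rfl
      · have h := tval_head_negone hDM hNM
        rw [hvM] at h
        have hA : (A M''.length : ℤ) < (A (n - 1) : ℤ) := by omega
        have := lt_of_A_lt (by exact_mod_cast hA)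
        simp only [List.length_cons]
        omega
      · simp at hhM
      · have h := tval_head_one hDM hNM
        rw [hvM] at h
        have hA : (A M''.length : ℤ) < (A (n - 2) : ℤ) := by omega
        have := lt_of_A_lt (by exact_mod_cast hA)
        simp only [List.length_cons]
        omega
  have hMf2 : M.head? = some 1 → M.length + 2 ≤ n := by
    intro hc
    cases M with
    | nil => simp at hc
    | cons c M'' =>
      simp only [List.head?_cons, Option.some_inj] at hc
      subst hc
      have h := tval_head_one hDM hNM
      rw [hvM] at h
      have hA : (A M''.length : ℤ) < (A (n - 2) : ℤ) := by omega
      have := lt_of_A_lt (by exact_mod_cast hA)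
      simp only [List.length_cons]
      omega
  obtain ⟨L, hD, hN, hh, hv⟩ := build n M hDM hNM hMf1 hMf2
  refine ⟨L, hD, hN, by rw [hh]; simp, ?_⟩
  rw [hv, hvM]
  ring

theorem exists_rep (N : ℤ) :
    ∃ L : List ℤ, Dig L ∧ NoF L ∧ L.head? ≠ some 0 ∧ Tval L = N := by
  rcases lt_trichotomy N 0 with h | rfl | h
  · obtain ⟨L, h1, h2, h3, h4⟩ := exists_rep_pos (-N).natAbs (-N) (by omega) le_rfl
    exact ⟨negL L, dig_negL h1, noF_negL h2, head_negL h3, by rw [tval_negL, h4]; ring⟩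
  · exact ⟨[], by intro d hd; simp at hd, noF_nil, by simp, tval_nil⟩
  · exact exists_rep_pos N.natAbs N h le_rfl

end TribAux

theorem stmt_15 (N : ℤ) :
    ∃! L : List ℤ,
      (∀ d ∈ L, d = -1 ∨ d = 0 ∨ d = 1) ∧
      (∀ h : L ≠ [], L.head h ≠ 0) ∧
      (∀ w ∈ TforbiddenT, ¬ w.IsInfix L) ∧
      Tval L = N := by
  obtain ⟨L, h1, h2, h3, h4⟩ := TribAux.exists_rep N
  refine ⟨L, ⟨h1, ?_, h2, h4⟩, ?_⟩
  · intro hne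
    cases L with
    | nil => exact absurd rfl hne
    | cons a t => simpa using h3
  · rintro M ⟨m1, m2, m3, m4⟩
    have hm3 : M.head? ≠ some 0 := by
      cases M with
      | nil => simp
      | cons a t => simpa using m2 (by simp)
    have hval : Tval M = Tval L := by rw [m4, h4]
    have hlen := TribAux.length_eq m1 m3 hm3 h1 h2 h3 hval
    exact TribAux.tval_inj M.length M L le_rfl hlen m1 m3 h1 h2 hval
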